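/- For every map u:ℝ→𝕊² of class C³, the identity ∇ₓ²uₓ + (1/2)|uₓ|²uₓ = uₓₓₓ + (3/2) ∂ₓ{ uₓ×(u×uₓ) } holds pointwise on ℝ. Consequently, for maps into 𝕊² the equation u_t = a∇ₓ²uₓ + u×uₓₓ + (a/2)|uₓ|²uₓ coincides with the Fukumoto–Miyazaki vortex-filament equation u_t = u×uₓₓ + a[ uₓₓₓ + (3/2){uₓ×(u×uₓ)}ₓ ]. -/

import Mathlib

open MeasureTheory Matrix Filter
open scoped Matrix

noncomputable section

/-- ℝ³, the codomain of sphere-valued maps. -/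
abbrev R3 := Fin 3 → ℝ

/-- Covariant derivative, along the sphere-valued map `u`, of a vector field `V` along `u`:
`∇ₓV = Vₓ + (V·uₓ)u`. -/
def covD (u V : ℝ → R3) : ℝ → R3 := fun x => deriv V x + (V x ⬝ᵥ deriv u x) • u x

/-- Iterated covariant derivative along `u`. -/
def covDIter (u : ℝ → R3) : ℕ → (ℝ → R3) → ℝ → R3
  | 0, V => V
  | n + 1, V => covD u (covDIter u n V)

/-- Membership of `f` in the Sobolev space `H^m(ℝ;ℝ³)` (classical-derivative reading):
all derivatives of order `< m` exist and all derivatives of order `≤ m` are in `L²`. -/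
def InHm (m : ℕ) (f : ℝ → R3) : Prop :=
  (∀ j < m, Differentiable ℝ (iteratedDeriv j f)) ∧
  ∀ j ≤ m, MemLp (iteratedDeriv j f) 2 volume

/-- `u ∈ H^{m+1}(ℝ;𝕊²)` : a continuous map into the unit sphere whose derivative `uₓ`
belongs to `H^m(ℝ;ℝ³)`. -/
def SphereSobolev (m : ℕ) (u : ℝ → R3) : Prop :=
  Continuous u ∧ (∀ x, u x ⬝ᵥ u x = 1) ∧ Differentiable ℝ u ∧ InHm m (deriv u)

/-- `u ∈ C(I;H^{m+1}(ℝ;𝕊²))` : `u` is continuous on `I × ℝ`, `u(t) ∈ H^{m+1}(ℝ;𝕊²)` for every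
`t ∈ I`, and `t ↦ uₓ(t,·)` is continuous from `I` into `H^m(ℝ;ℝ³)` (i.e. all `x`-derivatives of
`uₓ` up to order `m` are continuous in `t` with respect to the `L²`-distance). -/
def ContIntoHm (I : Set ℝ) (m : ℕ) (u : ℝ → ℝ → R3) : Prop :=
  ContinuousOn (fun p : ℝ × ℝ => u p.1 p.2) (I ×ˢ (Set.univ : Set ℝ)) ∧
  (∀ t ∈ I, SphereSobolev m (u t)) ∧
  ∀ j ≤ m, ∀ t₀ ∈ I,
    Tendsto
      (fun t =>
        eLpNorm (fun x => iteratedDeriv j (deriv (u t)) x - iteratedDeriv j (deriv (u t₀)) x)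
          2 volume)
      (nhdsWithin t₀ I) (nhds 0)

/-- `u` solves `u_t = -ε∇ₓ³uₓ + a∇ₓ²uₓ + u×uₓₓ + b|uₓ|²uₓ` on `I × ℝ`
(the dispersive flow equation for `ε = 0`, its parabolic regularization for `ε > 0`). -/
def SolvesDF (ε a b : ℝ) (I : Set ℝ) (u : ℝ → ℝ → R3) : Prop :=
  ∀ t ∈ I, ∀ x : ℝ,
    HasDerivWithinAt (fun s => u s x)
      ((-ε) • covDIter (u t) 3 (deriv (u t)) x
        + a • covDIter (u t) 2 (deriv (u t)) x
        + (u t x) ⨯₃ (iteratedDeriv 2 (u t) x)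
        + (b * (deriv (u t) x ⬝ᵥ deriv (u t) x)) • deriv (u t) x)
      I t

/-- The squared `L²(ℝ;ℝ³)`-norm (with the Euclidean inner product on ℝ³). -/
def l2normSq (f : ℝ → R3) : ℝ := ∫ x : ℝ, f x ⬝ᵥ f x

/-- The `L²(ℝ;ℝ³)`-norm (with the Euclidean inner product on ℝ³). -/
def l2norm (f : ℝ → R3) : ℝ := Real.sqrt (l2normSq f)

/-- The `H^m(ℝ;ℝ³)`-norm of `f`. -/
def sobNorm (m : ℕ) (f : ℝ → R3) : ℝ :=
  Real.sqrt (∑ j ∈ Finset.range (m + 1), l2normSq (iteratedDeriv j f))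

/-- The initial value problem with data `u₀` for the equation encoded by `SolvesDF ε a b`
has a unique solution in the class `C(I;H^{m+1}(ℝ;𝕊²))`. -/
def IsUniqueSolOn (I : Set ℝ) (ε a b : ℝ) (m : ℕ) (u₀ : ℝ → R3) : Prop :=
  ∃ u : ℝ → ℝ → R3,
    (ContIntoHm I m u ∧ SolvesDF ε a b I u ∧ ∀ x, u 0 x = u₀ x) ∧
    ∀ v : ℝ → ℝ → R3,
      (ContIntoHm I m v ∧ SolvesDF ε a b I v ∧ ∀ x, v 0 x = u₀ x) →
      ∀ t ∈ I, ∀ x, v t x = u t x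

lemma hasDerivAt_dotp {f g : ℝ → R3} {f' g' : R3} {x : ℝ}
    (hf : HasDerivAt f f' x) (hg : HasDerivAt g g' x) :
    HasDerivAt (fun y => f y ⬝ᵥ g y) (f' ⬝ᵥ g x + f x ⬝ᵥ g') x := by
  have h : ∀ i, HasDerivAt (fun y => f y i * g y i) (f' i * g x i + f x i * g' i) x :=
    fun i => ((hasDerivAt_pi.mp hf) i).mul ((hasDerivAt_pi.mp hg) i)
  have := HasDerivAt.fun_sum (fun i (_ : i ∈ Finset.univ) => h i)
  simpa [dotProduct, Finset.sum_add_distrib] using this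

lemma cross_triple (a b : R3) : a ⨯₃ (b ⨯₃ a) = (a ⬝ᵥ a) • b - (a ⬝ᵥ b) • a := by
  funext i
  fin_cases i <;> simp [cross_apply, dotProduct, Fin.sum_univ_three] <;> ring


/-- For every `C³` map `u : ℝ → 𝕊²`, the identity
`∇ₓ²uₓ + (1/2)|uₓ|²uₓ = uₓₓₓ + (3/2)∂ₓ{uₓ×(u×uₓ)}` holds pointwise; consequently, for maps
into `𝕊²`, `a∇ₓ²uₓ + u×uₓₓ + (a/2)|uₓ|²uₓ = u×uₓₓ + a[uₓₓₓ + (3/2){uₓ×(u×uₓ)}ₓ]`, i.e. the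
third-order dispersive flow equation coincides with the Fukumoto–Miyazaki equation. -/
theorem fukumoto_miyazaki_identity
    (u : ℝ → R3) (hu : ContDiff ℝ 3 u) (hsph : ∀ x, u x ⬝ᵥ u x = 1) :
    (∀ x : ℝ,
      covDIter u 2 (deriv u) x + ((1 / 2) * (deriv u x ⬝ᵥ deriv u x)) • deriv u x
        = iteratedDeriv 3 u x
          + (3 / 2 : ℝ) • deriv (fun y => (deriv u y) ⨯₃ ((u y) ⨯₃ (deriv u y))) x) ∧
    ∀ (a : ℝ) (x : ℝ),
      a • covDIter u 2 (deriv u) x + (u x) ⨯₃ (iteratedDeriv 2 u x)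
          + (a / 2 * (deriv u x ⬝ᵥ deriv u x)) • deriv u x
        = (u x) ⨯₃ (iteratedDeriv 2 u x)
          + a • (iteratedDeriv 3 u x
              + (3 / 2 : ℝ) • deriv (fun y => (deriv u y) ⨯₃ ((u y) ⨯₃ (deriv u y))) x) := by
  set f := deriv u with hf
  have h1 : Differentiable ℝ u := hu.differentiable (by norm_num)
  have hcf : ContDiff ℝ 2 f := by
    have := (contDiff_succ_iff_deriv.mp (show ContDiff ℝ (2+1) u from hu)).2.2
    exact this
  have h2 : Differentiable ℝ f := hcf.differentiable (by norm_num)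
  have hcf' : ContDiff ℝ 1 (deriv f) :=
    (contDiff_succ_iff_deriv.mp (show ContDiff ℝ (1+1) f from hcf)).2.2
  have h3 : Differentiable ℝ (deriv f) := hcf'.differentiable (by norm_num)
  have hHu : ∀ y, HasDerivAt u (f y) y := fun y => (h1 y).hasDerivAt
  have hHf : ∀ y, HasDerivAt f (deriv f y) y := fun y => (h2 y).hasDerivAt
  have hx0 : ∀ y, u y ⬝ᵥ f y = 0 := by
    intro y
    have hd : HasDerivAt (fun z => u z ⬝ᵥ u z) (f y ⬝ᵥ u y + u y ⬝ᵥ f y) y :=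
      hasDerivAt_dotp (hHu y) (hHu y)
    have he : (fun z => u z ⬝ᵥ u z) = fun _ => (1:ℝ) := funext hsph
    rw [he] at hd
    have h0 := (hasDerivAt_const y (1:ℝ)).unique hd
    rw [dotProduct_comm] at h0
    linarith
  have hc : ∀ y, HasDerivAt (fun z => f z ⬝ᵥ f z)
      (deriv f y ⬝ᵥ f y + f y ⬝ᵥ deriv f y) y :=
    fun y => hasDerivAt_dotp (hHf y) (hHf y)
  have hcov1 : covD u f = fun y => deriv f y + (f y ⬝ᵥ f y) • u y := by
    funext y; simp [covD, ← hf]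
  have hcross : (fun y => (deriv u y) ⨯₃ ((u y) ⨯₃ (deriv u y)))
      = fun y => (f y ⬝ᵥ f y) • u y := by
    funext y
    rw [← hf, cross_triple, dotProduct_comm (f y) (u y), hx0 y]
    simp
  have key : ∀ x : ℝ,
      covDIter u 2 (deriv u) x + ((1 / 2) * (deriv u x ⬝ᵥ deriv u x)) • deriv u x
        = iteratedDeriv 3 u x
          + (3 / 2 : ℝ) • deriv (fun y => (deriv u y) ⨯₃ ((u y) ⨯₃ (deriv u y))) x := by
    intro x
    have hD1 : HasDerivAt (covD u f)
        (deriv (deriv f) x + ((f x ⬝ᵥ f x) • f x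
          + (deriv f x ⬝ᵥ f x + f x ⬝ᵥ deriv f x) • u x)) x := by
      rw [hcov1]
      exact (h3 x).hasDerivAt.add ((hc x).smul (hHu x))
    have hDc : HasDerivAt (fun y => (f y ⬝ᵥ f y) • u y)
        ((f x ⬝ᵥ f x) • f x + (deriv f x ⬝ᵥ f x + f x ⬝ᵥ deriv f x) • u x) x :=
      (hc x).smul (hHu x)
    have e3 : iteratedDeriv 3 u x = deriv (deriv f) x := by
      show iteratedDeriv (1+1+1) u x = _
      rw [iteratedDeriv_succ, iteratedDeriv_succ, iteratedDeriv_one, ← hf]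
    have ecross : deriv (fun y => (deriv u y) ⨯₃ ((u y) ⨯₃ (deriv u y))) x
        = (f x ⬝ᵥ f x) • f x + (deriv f x ⬝ᵥ f x + f x ⬝ᵥ deriv f x) • u x := by
      rw [hcross]; exact hDc.deriv
    have e2 : covDIter u 2 (deriv u) x
        = deriv (deriv f) x + ((f x ⬝ᵥ f x) • f x
          + (deriv f x ⬝ᵥ f x + f x ⬝ᵥ deriv f x) • u x)
          + (deriv f x ⬝ᵥ f x) • u x := by
      show covD u (covD u f) x = _
      rw [covD, hD1.deriv, hcov1]
      simp only [← hf, add_dotProduct, smul_dotProduct, smul_eq_mul, hx0 x, mul_zero, add_zero]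
    rw [e2, e3, ecross, ← hf]
    have hcm : f x ⬝ᵥ deriv f x = deriv f x ⬝ᵥ f x := dotProduct_comm _ _
    rw [hcm]
    module
  refine ⟨key, fun a x => ?_⟩
  have h := key x
  rw [← h]
  module

end
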